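/- arXiv:2104.00360 — 6 statements merged into one kernel-verified Lean document; each statement's English description precedes it below -/
import Mathlib

section
/- Let E be a real inner product space, n a positive integer, and M an n×n real symmetric matrix with zero diagonal (M_{ii} = 0 for all i). Let v_1, …, v_n ∈ E with ‖v_i‖ = 1 for every i, let θ_1, …, θ_n > 0, and define w_1, …, w_n recursively by: g_i = Σ_{l<i} M_{il}·w_l + Σ_{l>i} M_{il}·v_l, y_i = ‖v_i − θ_i·g_i‖, and (assuming y_i > 0 for every i) w_i = (1/y_i)·(v_i − θ_i·g_i). Then f(v_1,…,v_n) − f(w_1,…,w_n) = Σ_{i=1}^n ((1 + y_i)/θ_i)·‖v_i − w_i‖². -/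
open RealInnerProductSpace Finset

private lemma swap_tri {n : ℕ} (F : Fin n → Fin n → ℝ) :
    ∑ i, ∑ l ∈ Finset.Iio i, F i l = ∑ i, ∑ l ∈ Finset.Ioi i, F l i := by
  rw [Finset.sum_sigma', Finset.sum_sigma']
  exact Finset.sum_nbij' (fun p => ⟨p.2, p.1⟩) (fun p => ⟨p.2, p.1⟩)
    (by simp) (by simp) (by simp) (by simp) (by simp)

/-- Descent identity for one full Gauss–Seidel sweep of the mixing update (Lemma 5). -/
theorem stmt_0 {E : Type*} [NormedAddCommGroup E] [InnerProductSpace ℝ E]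
    (n : ℕ) (hn : 0 < n) (M : Matrix (Fin n) (Fin n) ℝ)
    (hMsymm : M.IsSymm) (hMdiag : ∀ i, M i i = 0)
    (v w g : Fin n → E) (y θ : Fin n → ℝ)
    (hv : ∀ i, ‖v i‖ = 1) (hθ : ∀ i, 0 < θ i)
    (hg : ∀ i, g i = (∑ l ∈ Finset.Iio i, M i l • w l) + ∑ l ∈ Finset.Ioi i, M i l • v l)
    (hy : ∀ i, y i = ‖v i - θ i • g i‖) (hy0 : ∀ i, 0 < y i)
    (hw : ∀ i, w i = (y i)⁻¹ • (v i - θ i • g i)) :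
    (∑ i, ∑ j, M i j * ⟪v i, v j⟫) - (∑ i, ∑ j, M i j * ⟪w i, w j⟫) =
      ∑ i, ((1 + y i) / θ i) * ‖v i - w i‖ ^ 2 := by
  have hsymm : ∀ i j, M j i = M i j := fun i j => (hMsymm.apply i j)
  -- per-index identity
  have key : ∀ i, ((1 + y i) / θ i) * ‖v i - w i‖ ^ 2 = 2 * ⟪v i - w i, g i⟫ := by
    intro i
    have hθ' : θ i ≠ 0 := (hθ i).ne'
    have hw1 : ‖w i‖ = 1 := by
      rw [hw i, norm_smul, ← hy i, Real.norm_eq_abs, abs_of_pos (inv_pos.mpr (hy0 i)),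
        inv_mul_cancel₀ (hy0 i).ne']
    have hgw : θ i • g i = v i - y i • w i := by
      rw [hw i, smul_smul, mul_inv_cancel₀ (hy0 i).ne', one_smul]; abel
    have h1 : θ i * ⟪v i - w i, g i⟫ = (1 + y i) * (1 - ⟪v i, w i⟫) := by
      rw [← real_inner_smul_right, hgw]
      simp only [inner_sub_left, inner_sub_right, real_inner_smul_right,
        real_inner_self_eq_norm_sq, hv, hw1, real_inner_comm (w i) (v i)]
      ring
    have h3 : ‖v i - w i‖ ^ 2 = 2 - 2 * ⟪v i, w i⟫ := by
      rw [@norm_sub_sq_real, hv, hw1]; ring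
    rw [h3]
    field_simp
    linear_combination (-1) * h1
  -- expand the inner product with g
  have hgd : ∀ i, 2 * ⟪v i - w i, g i⟫ =
      (∑ l ∈ Finset.Iio i, 2 * (M i l * ⟪v i - w i, w l⟫)) +
      ∑ l ∈ Finset.Ioi i, 2 * (M i l * ⟪v i - w i, v l⟫) := by
    intro i
    rw [hg i, inner_add_right, inner_sum, inner_sum, mul_add, Finset.mul_sum,
      Finset.mul_sum]
    simp [real_inner_smul_right]
  simp only [key, hgd]
  -- Step 1: rewrite LHS using d i = v i - w i
  have S2 : ∑ i, ∑ j, M i j * ⟪w i, v j - w j⟫ = ∑ i, ∑ j, M i j * ⟪v i - w i, w j⟫ := by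
    rw [Finset.sum_comm]
    refine Finset.sum_congr rfl fun j _ => Finset.sum_congr rfl fun i _ => ?_
    rw [hsymm j i, real_inner_comm]
  have E1 : (∑ i, ∑ j, M i j * ⟪v i, v j⟫) - (∑ i, ∑ j, M i j * ⟪w i, w j⟫) =
      ∑ i, ∑ j, (M i j * ⟪v i - w i, v j⟫ + M i j * ⟪v i - w i, w j⟫) := by
    have e0 : (∑ i, ∑ j, M i j * ⟪v i, v j⟫) - (∑ i, ∑ j, M i j * ⟪w i, w j⟫) =
        (∑ i, ∑ j, M i j * ⟪v i - w i, v j⟫) + ∑ i, ∑ j, M i j * ⟪w i, v j - w j⟫ := by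
      rw [← Finset.sum_sub_distrib, ← Finset.sum_add_distrib]
      refine Finset.sum_congr rfl fun i _ => ?_
      rw [← Finset.sum_sub_distrib, ← Finset.sum_add_distrib]
      refine Finset.sum_congr rfl fun j _ => ?_
      simp only [inner_sub_left, inner_sub_right]
      ring
    rw [e0, S2, ← Finset.sum_add_distrib]
    refine Finset.sum_congr rfl fun i _ => ?_
    rw [← Finset.sum_add_distrib]
  rw [E1]
  -- Step 2: split each inner sum at the diagonal
  have E2 : ∀ i, ∑ j, (M i j * ⟪v i - w i, v j⟫ + M i j * ⟪v i - w i, w j⟫) =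
      (∑ l ∈ Finset.Iio i, (M i l * ⟪v i - w i, v l⟫ + M i l * ⟪v i - w i, w l⟫)) +
      ∑ l ∈ Finset.Ioi i, (M i l * ⟪v i - w i, v l⟫ + M i l * ⟪v i - w i, w l⟫) := by
    intro i
    have hdisj : Disjoint (Finset.Iio i) (Finset.Ioi i) :=
      Finset.disjoint_left.mpr fun a ha hb =>
        absurd (Finset.mem_Ioi.mp hb) (not_lt.mpr (Finset.mem_Iio.mp ha).le)
    rw [← Finset.sum_union hdisj]
    refine (Finset.sum_subset (Finset.subset_univ _) fun j _ hj => ?_).symm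
    simp only [Finset.mem_union, Finset.mem_Iio, Finset.mem_Ioi, not_or, not_lt] at hj
    have : j = i := le_antisymm hj.2 hj.1
    subst this
    simp [hMdiag j]
  simp only [E2]
  -- Step 3: the swap identity
  have swap := swap_tri (fun i l => M i l * ⟪v i - w i, v l - w l⟫)
  have swap2 : ∑ i, ∑ l ∈ Finset.Ioi i, M l i * ⟪v l - w l, v i - w i⟫
      = ∑ i, ∑ l ∈ Finset.Ioi i, M i l * ⟪v i - w i, v l - w l⟫ := by
    refine Finset.sum_congr rfl fun i _ => Finset.sum_congr rfl fun l _ => ?_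
    rw [hsymm i l, real_inner_comm]
  beta_reduce at swap
  rw [swap2] at swap
  simp only [inner_sub_right, mul_sub, Finset.sum_sub_distrib] at swap
  simp only [Finset.sum_add_distrib, two_mul]
  linarith [swap]
end

section
/- Let E be a real inner product space, let v, g ∈ E with ‖v‖ = 1, let θ > 0, set y = ‖v − θ·g‖, assume y > 0, and set v̂ = (1/y)·(v − θ·g). Then 2·⟨g, v − v̂⟩ = ((1 + y)/θ)·‖v − v̂‖². -/
open RealInnerProductSpace

/-- Per-coordinate identity for the normalized gradient update on the unit sphere. -/
theorem stmt_1 {E : Type*} [NormedAddCommGroup E] [InnerProductSpace ℝ E]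
    (v g : E) (hv : ‖v‖ = 1) (θ : ℝ) (hθ : 0 < θ)
    (y : ℝ) (hy : y = ‖v - θ • g‖) (hy0 : 0 < y)
    (vhat : E) (hvhat : vhat = y⁻¹ • (v - θ • g)) :
    2 * ⟪g, v - vhat⟫ = ((1 + y) / θ) * ‖v - vhat‖ ^ 2 := by
  have hvv : ⟪v, v⟫ = 1 := by
    rw [real_inner_self_eq_norm_sq, hv]; ring
  have hnorm : ‖vhat‖ = 1 := by
    rw [hvhat, norm_smul, ← hy, Real.norm_eq_abs, abs_inv, abs_of_pos hy0,
      inv_mul_cancel₀ hy0.ne']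
  have hhh : ⟪vhat, vhat⟫ = 1 := by
    rw [real_inner_self_eq_norm_sq, hnorm]; ring
  have hg : θ • g = v - y • vhat := by
    rw [hvhat, smul_smul, mul_inv_cancel₀ hy0.ne', one_smul]
    abel
  have key : θ * ⟪g, v - vhat⟫ = ⟪v - y • vhat, v - vhat⟫ := by
    rw [← real_inner_smul_left, hg]
  have hexp : ⟪v - y • vhat, v - vhat⟫ = (1 + y) * (1 - ⟪v, vhat⟫) := by
    simp only [inner_sub_left, inner_sub_right, real_inner_smul_left, hvv, hhh,
      real_inner_comm vhat v]
    ring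
  have hns : ‖v - vhat‖ ^ 2 = 2 - 2 * ⟪v, vhat⟫ := by
    rw [norm_sub_sq_real, hv, hnorm]; ring
  rw [hns]
  have hθ' : θ ≠ 0 := hθ.ne'
  field_simp
  nlinarith [key, hexp]
end

section
/- Let E be a real inner product space, n a positive integer, and M an n×n real symmetric matrix with zero diagonal (M_{ii} = 0 for all i). For each i let θ_i > 0 satisfy θ_i·Σ_{j=1}^n |M_{ij}| < 1. Let v_i(t) for t ∈ ℕ be the Gauss–Seidel sequence defined by: ‖v_i(0)‖ = 1 for all i, and for each t and each i (in increasing order of i), g_i(t) = Σ_{l<i} M_{il}·v_l(t+1) + Σ_{l>i} M_{il}·v_l(t) and v_i(t+1) = (v_i(t) − θ_i·g_i(t))/‖v_i(t) − θ_i·g_i(t)‖. Then: (a) all the updates are well defined, with ‖v_i(t) − θ_i·g_i(t)‖ ≥ 1 − θ_i·Σ_{j}|M_{ij}| > 0 and ‖v_i(t)‖ = 1 for all i and t; (b) the objective values f(v_1(t),…,v_n(t)) are nonincreasing in t; and (c) Σ_{t=0}^∞ Σ_{i=1}^n ‖v_i(t+1) − v_i(t)‖² ≤ θ̄·(f(v_1(0),…,v_n(0))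 + Σ_{i,j}|M_{ij}|), where θ̄ = max_i θ_i; in particular ‖v_i(t+1) − v_i(t)‖ → 0 as t → ∞ for every i. -/
open RealInnerProductSpace Finset Filter Topology

section Aux
variable {E : Type*} [NormedAddCommGroup E] [InnerProductSpace ℝ E] {n : ℕ}

noncomputable def Fobj (M : Matrix (Fin n) (Fin n) ℝ) (w : Fin n → E) : ℝ :=
  ∑ i, ∑ j, M i j * ⟪w i, w j⟫

lemma F_split (M : Matrix (Fin n) (Fin n) ℝ) (hMsymm : M.IsSymm) (hMdiag : ∀ i, M i i = 0)
    (w : Fin n → E) (k : Fin n) :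
    Fobj M w = 2 * ⟪w k, ∑ l, M k l • w l⟫ +
      ∑ i ∈ univ.erase k, ∑ j ∈ univ.erase k, M i j * ⟪w i, w j⟫ := by
  have hsym : ∀ i j, M i j = M j i := fun i j => (Matrix.IsSymm.apply hMsymm j i)
  have hrow : ∀ i : Fin n, ∑ j, M i j * ⟪w i, w j⟫
      = M i k * ⟪w i, w k⟫ + ∑ j ∈ univ.erase k, M i j * ⟪w i, w j⟫ :=
    fun i => (Finset.add_sum_erase univ _ (mem_univ k)).symm
  have h1 : Fobj M w = ∑ i, M i k * ⟪w i, w k⟫ +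
      ∑ i, ∑ j ∈ univ.erase k, M i j * ⟪w i, w j⟫ := by
    rw [Fobj]
    rw [Finset.sum_congr rfl (fun i _ => hrow i), Finset.sum_add_distrib]
  have h2 : ∑ i, M i k * ⟪w i, w k⟫
      = M k k * ⟪w k, w k⟫ + ∑ i ∈ univ.erase k, M i k * ⟪w i, w k⟫ :=
    (Finset.add_sum_erase univ _ (mem_univ k)).symm
  have h3 : ∑ i, ∑ j ∈ univ.erase k, M i j * ⟪w i, w j⟫
      = (∑ j ∈ univ.erase k, M k j * ⟪w k, w j⟫) +
        ∑ i ∈ univ.erase k, ∑ j ∈ univ.erase k, M i j * ⟪w i, w j⟫ :=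
    (Finset.add_sum_erase univ _ (mem_univ k)).symm
  have h4 : ∑ i ∈ univ.erase k, M i k * ⟪w i, w k⟫
      = ∑ j ∈ univ.erase k, M k j * ⟪w k, w j⟫ := by
    refine Finset.sum_congr rfl fun i _ => ?_
    rw [hsym i k, real_inner_comm]
  have h5 : ⟪w k, ∑ l, M k l • w l⟫ = ∑ j ∈ univ.erase k, M k j * ⟪w k, w j⟫ := by
    rw [inner_sum]
    rw [← Finset.add_sum_erase univ (fun l => ⟪w k, M k l • w l⟫) (mem_univ k)]
    simp [real_inner_smul_right, hMdiag k]
  rw [h1, h2, h3, h4, h5, hMdiag k]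
  ring

lemma F_update (M : Matrix (Fin n) (Fin n) ℝ) (hMsymm : M.IsSymm) (hMdiag : ∀ i, M i i = 0)
    (w : Fin n → E) (k : Fin n) (x : E) :
    Fobj M (Function.update w k x) = Fobj M w + 2 * ⟪x - w k, ∑ l, M k l • w l⟫ := by
  have hsum : ∑ l, M k l • (Function.update w k x) l = ∑ l, M k l • w l := by
    refine Finset.sum_congr rfl fun l _ => ?_
    rcases eq_or_ne l k with rfl | h
    · simp [hMdiag]
    · rw [Function.update_of_ne h]
  have hrest : ∑ i ∈ univ.erase k, ∑ j ∈ univ.erase k,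
        M i j * ⟪(Function.update w k x) i, (Function.update w k x) j⟫
      = ∑ i ∈ univ.erase k, ∑ j ∈ univ.erase k, M i j * ⟪w i, w j⟫ := by
    refine Finset.sum_congr rfl fun i hi => Finset.sum_congr rfl fun j hj => ?_
    rw [Function.update_of_ne (Finset.ne_of_mem_erase hi),
        Function.update_of_ne (Finset.ne_of_mem_erase hj)]
  rw [F_split M hMsymm hMdiag (Function.update w k x) k,
      F_split M hMsymm hMdiag w k, hsum, hrest, Function.update_self,
      inner_sub_left]
  ring
end Aux


lemma key_lemma {E : Type*} [NormedAddCommGroup E] [InnerProductSpace ℝ E]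
    {n : ℕ} (M : Matrix (Fin n) (Fin n) ℝ)
    (θ : Fin n → ℝ) (hθ : ∀ i, 0 < θ i) (hθM : ∀ i, θ i * ∑ j, |M i j| < 1)
    (v : ℕ → Fin n → E) (g : ℕ → Fin n → E)
    (hg : ∀ t i, g t i =
      (∑ l ∈ Finset.Iio i, M i l • v (t + 1) l) + ∑ l ∈ Finset.Ioi i, M i l • v t l)
    (hup : ∀ t i, v (t + 1) i = ‖v t i - θ i • g t i‖⁻¹ • (v t i - θ i • g t i)) :
    ∀ t, (∀ i, ‖v t i‖ = 1) →
      ∀ i : Fin n, ‖g t i‖ ≤ ∑ j, |M i j| ∧ ‖v (t + 1) i‖ = 1 := by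
  have hpos : ∀ i : Fin n, (0:ℝ) < 1 - θ i * ∑ j, |M i j| := fun i => by
    have := hθM i; linarith
  intro t ht
  have main : ∀ m : ℕ, ∀ i : Fin n, i.val < m →
      (‖g t i‖ ≤ ∑ j, |M i j| ∧ ‖v (t + 1) i‖ = 1) := by
    intro m
    induction m with
    | zero => intro i hi; omega
    | succ m ih =>
      intro i hi
      have hgb : ‖g t i‖ ≤ ∑ j, |M i j| := by
        rw [hg]
        calc ‖(∑ l ∈ Finset.Iio i, M i l • v (t + 1) l) + ∑ l ∈ Finset.Ioi i, M i l • v t l‖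
            ≤ ‖∑ l ∈ Finset.Iio i, M i l • v (t + 1) l‖ + ‖∑ l ∈ Finset.Ioi i, M i l • v t l‖ :=
              norm_add_le _ _
          _ ≤ (∑ l ∈ Finset.Iio i, |M i l|) + ∑ l ∈ Finset.Ioi i, |M i l| := by
              gcongr
              · calc ‖∑ l ∈ Finset.Iio i, M i l • v (t + 1) l‖
                    ≤ ∑ l ∈ Finset.Iio i, ‖M i l • v (t + 1) l‖ := norm_sum_le _ _
                  _ = ∑ l ∈ Finset.Iio i, |M i l| := by
                      refine Finset.sum_congr rfl fun l hl => ?_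
                      have hl' : l < i := Finset.mem_Iio.mp hl
                      have : ‖v (t + 1) l‖ = 1 :=
                        (ih l (lt_of_lt_of_le hl' (by exact_mod_cast Nat.lt_succ_iff.mp hi))).2
                      rw [norm_smul, this, Real.norm_eq_abs, mul_one]
              · calc ‖∑ l ∈ Finset.Ioi i, M i l • v t l‖
                    ≤ ∑ l ∈ Finset.Ioi i, ‖M i l • v t l‖ := norm_sum_le _ _
                  _ = ∑ l ∈ Finset.Ioi i, |M i l| := by
                      refine Finset.sum_congr rfl fun l hl => ?_
                      rw [norm_smul, ht l, Real.norm_eq_abs, mul_one]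
          _ = ∑ l ∈ Finset.Iio i ∪ Finset.Ioi i, |M i l| :=
              (Finset.sum_union (Finset.disjoint_Ioi_Iio i).symm).symm
          _ ≤ ∑ j, |M i j| := Finset.sum_le_sum_of_subset_of_nonneg
              (Finset.subset_univ _) (fun j _ _ => abs_nonneg _)
      have hlow : 1 - θ i * ∑ j, |M i j| ≤ ‖v t i - θ i • g t i‖ := by
        have h1 : ‖v t i‖ - ‖θ i • g t i‖ ≤ ‖v t i - θ i • g t i‖ := norm_sub_norm_le _ _
        have h2 : ‖θ i • g t i‖ ≤ θ i * ∑ j, |M i j| := by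
          rw [norm_smul, Real.norm_eq_abs, abs_of_pos (hθ i)]
          exact mul_le_mul_of_nonneg_left hgb (le_of_lt (hθ i))
        rw [ht i] at h1; linarith
      refine ⟨hgb, ?_⟩
      have hne : v t i - θ i • g t i ≠ 0 := by
        intro h
        rw [h, norm_zero] at hlow
        exact absurd hlow (not_le.mpr (hpos i))
      rw [hup t i, norm_smul, norm_inv, norm_norm,
        inv_mul_cancel₀ (norm_ne_zero_iff.mpr hne)]
  exact fun i => main (i.val + 1) i (Nat.lt_succ_self _)

lemma descent_step {E : Type*} [NormedAddCommGroup E] [InnerProductSpace ℝ E]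
    {n : ℕ} (M : Matrix (Fin n) (Fin n) ℝ)
    (hMsymm : M.IsSymm) (hMdiag : ∀ i, M i i = 0)
    (θ : Fin n → ℝ) (hθ : ∀ i, 0 < θ i) (hθM : ∀ i, θ i * ∑ j, |M i j| < 1)
    (θbar : ℝ) (hθbar : IsGreatest (Set.range θ) θbar)
    (v : ℕ → Fin n → E) (g : ℕ → Fin n → E)
    (hg : ∀ t i, g t i =
      (∑ l ∈ Finset.Iio i, M i l • v (t + 1) l) + ∑ l ∈ Finset.Ioi i, M i l • v t l)
    (hup : ∀ t i, v (t + 1) i = ‖v t i - θ i • g t i‖⁻¹ • (v t i - θ i • g t i))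
    (hnorm : ∀ t i, ‖v t i‖ = 1)
    (hlow : ∀ t i, 1 - θ i * ∑ j, |M i j| ≤ ‖v t i - θ i • g t i‖)
    (t : ℕ) :
    Fobj M (v (t+1)) + (∑ i, ‖v (t+1) i - v t i‖ ^ 2) / θbar ≤ Fobj M (v t) := by
  have hpos : ∀ i : Fin n, (0:ℝ) < 1 - θ i * ∑ j, |M i j| := fun i => by
    have := hθM i; linarith
  obtain ⟨⟨i0, hi0⟩, hub⟩ := hθbar
  have hθbarpos : 0 < θbar := hi0 ▸ hθ i0
  -- intermediate configurations
  set W : ℕ → Fin n → E := fun k l => if (l : ℕ) < k then v (t+1) l else v t l with hW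
  have hW0 : W 0 = v t := by funext l; simp [hW]
  have hWn : W n = v (t+1) := by funext l; simp [hW, l.isLt]
  -- per-coordinate inequality
  have hcoord : ∀ i : Fin n, 2 * ⟪v (t+1) i - v t i, g t i⟫ ≤
      -(‖v (t+1) i - v t i‖ ^ 2) / θbar := by
    intro i
    set x := v t i - θ i • g t i with hx
    have hxpos : 0 < ‖x‖ := lt_of_lt_of_le (hpos i) (hlow t i)
    have hw : v (t+1) i = ‖x‖⁻¹ • x := hup t i
    have hinner_w : ⟪v (t+1) i, x⟫ = ‖x‖ := by
      rw [hw, real_inner_smul_left, real_inner_self_eq_norm_sq, sq]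
      field_simp
    have hinner_u : ⟪v t i, x⟫ ≤ ‖x‖ := by
      calc ⟪v t i, x⟫ ≤ ‖v t i‖ * ‖x‖ := real_inner_le_norm _ _
        _ = ‖x‖ := by rw [hnorm t i, one_mul]
    have h0 : 0 ≤ ⟪v (t+1) i - v t i, x⟫ := by
      rw [inner_sub_left]; linarith
    have hexp : ⟪v (t+1) i - v t i, x⟫ =
        ⟪v (t+1) i - v t i, v t i⟫ - θ i * ⟪v (t+1) i - v t i, g t i⟫ := by
      rw [hx, inner_sub_right, real_inner_smul_right]
    have hnormsq : ‖v (t+1) i - v t i‖ ^ 2 = 2 - 2 * ⟪v (t+1) i, v t i⟫ := by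
      rw [← real_inner_self_eq_norm_sq, inner_sub_left, inner_sub_right, inner_sub_right,
        real_inner_self_eq_norm_sq, real_inner_self_eq_norm_sq, hnorm t i, hnorm (t+1) i,
        real_inner_comm (v t i) (v (t+1) i)]
      ring
    have huu : ⟪v (t+1) i - v t i, v t i⟫ = -(‖v (t+1) i - v t i‖ ^ 2) / 2 := by
      rw [inner_sub_left, real_inner_self_eq_norm_sq, hnorm t i]
      rw [hnormsq]; ring
    -- θ i * ⟪Δ, g⟫ ≤ -‖Δ‖²/2
    have h1 : θ i * ⟪v (t+1) i - v t i, g t i⟫ ≤ -(‖v (t+1) i - v t i‖ ^ 2) / 2 := by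
      rw [hexp, huu] at h0; linarith
    have hθi : θ i ≤ θbar := hub ⟨i, rfl⟩
    have hsq : 0 ≤ ‖v (t+1) i - v t i‖ ^ 2 := sq_nonneg _
    have h2 : 2 * ⟪v (t+1) i - v t i, g t i⟫ ≤ -(‖v (t+1) i - v t i‖ ^ 2) / θ i := by
      rw [le_div_iff₀ (hθ i)]
      nlinarith [hθ i]
    have h3 : ‖v (t+1) i - v t i‖ ^ 2 / θbar ≤ ‖v (t+1) i - v t i‖ ^ 2 / θ i :=
      div_le_div_of_nonneg_left hsq (hθ i) hθi
    rw [neg_div] at h2 ⊢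
    linarith
  -- structure of intermediate configs
  have hWstep : ∀ k : Fin n, W (k.val + 1) = Function.update (W k.val) k (v (t+1) k) := by
    intro k; funext l
    rcases eq_or_ne l k with rfl | hlk
    · simp [hW]
    · have hv : (l : ℕ) ≠ (k : ℕ) := fun h => hlk (Fin.ext h)
      rw [Function.update_of_ne hlk, hW]
      simp only
      have h : ((l : ℕ) < k.val + 1) ↔ ((l : ℕ) < k.val) := by omega
      exact if_congr h rfl rfl
  have hWk : ∀ k : Fin n, W k.val k = v t k := by
    intro k; simp [hW]
  have hgW : ∀ k : Fin n, g t k = ∑ l, M k l • (W k.val) l := by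
    intro k
    rw [hg]
    have hIio : ∀ l ∈ Finset.Iio k, M k l • W k.val l = M k l • v (t+1) l := by
      intro l hl
      have : (l : ℕ) < k.val := Fin.lt_def.mp (Finset.mem_Iio.mp hl)
      simp [hW, this]
    have hIoi : ∀ l ∈ Finset.Ioi k, M k l • W k.val l = M k l • v t l := by
      intro l hl
      have h1 : k.val < (l : ℕ) := Fin.lt_def.mp (Finset.mem_Ioi.mp hl)
      have : ¬ ((l : ℕ) < k.val) := by omega
      simp [hW, this]
    have hsplit : (univ : Finset (Fin n)) = Finset.Iio k ∪ (Finset.Ioi k ∪ {k}) := by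
      ext l
      simp only [mem_univ, Finset.mem_union, Finset.mem_Iio, Finset.mem_Ioi,
        Finset.mem_singleton, true_iff]
      rcases lt_trichotomy l k with h | h | h
      · exact Or.inl h
      · exact Or.inr (Or.inr h)
      · exact Or.inr (Or.inl h)
    have hd1 : Disjoint (Finset.Iio k) (Finset.Ioi k ∪ {k}) := by
      rw [Finset.disjoint_union_right]
      constructor
      · exact (Finset.disjoint_Ioi_Iio k).symm
      · simp
    have hd2 : Disjoint (Finset.Ioi k) ({k} : Finset (Fin n)) := by simp
    rw [hsplit, Finset.sum_union hd1, Finset.sum_union hd2,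
      Finset.sum_congr rfl hIio, Finset.sum_congr rfl hIoi]
    simp [hMdiag k]
  have hFstep : ∀ k : Fin n, Fobj M (W (k.val + 1)) =
      Fobj M (W k.val) + 2 * ⟪v (t+1) k - v t k, g t k⟫ := by
    intro k
    rw [hWstep k, F_update M hMsymm hMdiag, ← hgW k, hWk k]
  have hchain : ∀ k, k ≤ n → Fobj M (W k) +
      ∑ i ∈ univ.filter (fun i : Fin n => i.val < k), ‖v (t+1) i - v t i‖ ^ 2 / θbar
      ≤ Fobj M (v t) := by
    intro k
    induction k with
    | zero => intro _; simp [hW0]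
    | succ k ih =>
      intro hk
      have hkn : k < n := hk
      set i : Fin n := ⟨k, hkn⟩ with hi
      have hfilter : univ.filter (fun j : Fin n => j.val < k + 1)
          = insert i (univ.filter (fun j : Fin n => j.val < k)) := by
        ext j
        simp only [Finset.mem_filter, mem_univ, true_and, Finset.mem_insert, Fin.ext_iff, hi]
        omega
      have hnm : i ∉ univ.filter (fun j : Fin n => j.val < k) := by simp [hi]
      have hstep := hFstep i
      have hc := hcoord i
      have hih := ih (le_of_lt hkn)
      rw [hfilter, Finset.sum_insert hnm]
      have : Fobj M (W (k+1)) ≤ Fobj M (W k) - ‖v (t+1) i - v t i‖ ^ 2 / θbar := by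
        have : (i.val : ℕ) = k := rfl
        rw [hFstep i, this]
        rw [neg_div] at hc
        linarith
      linarith
  have hfin := hchain n le_rfl
  rw [hWn] at hfin
  have huniv : univ.filter (fun i : Fin n => i.val < n) = univ := by
    ext i; simp [i.isLt]
  rw [huniv, ← Finset.sum_div] at hfin
  exact hfin

/-- Convergence-to-critical-points part of Theorem 1 for the synchronous algorithm in its
Gauss–Seidel form: the updates are well defined, the objective values are nonincreasing,
and the successive iterates are asymptotically stationary. -/
theorem stmt_8 {E : Type*} [NormedAddCommGroup E] [InnerProductSpace ℝ E]
    (n : ℕ) (hn : 0 < n) (M : Matrix (Fin n) (Fin n) ℝ)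
    (hMsymm : M.IsSymm) (hMdiag : ∀ i, M i i = 0)
    (θ : Fin n → ℝ) (hθ : ∀ i, 0 < θ i) (hθM : ∀ i, θ i * ∑ j, |M i j| < 1)
    (θbar : ℝ) (hθbar : IsGreatest (Set.range θ) θbar)
    (v : ℕ → Fin n → E) (g : ℕ → Fin n → E)
    (hv0 : ∀ i, ‖v 0 i‖ = 1)
    (hg : ∀ t i, g t i =
      (∑ l ∈ Finset.Iio i, M i l • v (t + 1) l) + ∑ l ∈ Finset.Ioi i, M i l • v t l)
    (hup : ∀ t i, v (t + 1) i = ‖v t i - θ i • g t i‖⁻¹ • (v t i - θ i • g t i)) :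
    (∀ t i, 1 - θ i * ∑ j, |M i j| ≤ ‖v t i - θ i • g t i‖ ∧
        0 < 1 - θ i * ∑ j, |M i j| ∧ ‖v t i‖ = 1) ∧
    (Antitone fun t => ∑ i, ∑ j, M i j * ⟪v t i, v t j⟫) ∧
    (∑' t : ℕ, ∑ i, ‖v (t + 1) i - v t i‖ ^ 2 ≤
        θbar * ((∑ i, ∑ j, M i j * ⟪v 0 i, v 0 j⟫) + ∑ i, ∑ j, |M i j|)) ∧
    (∀ i, Tendsto (fun t => ‖v (t + 1) i - v t i‖) atTop (𝓝 0)) := by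
  have hpos : ∀ i : Fin n, (0:ℝ) < 1 - θ i * ∑ j, |M i j| := fun i => by
    have := hθM i; linarith
  obtain ⟨⟨i0, hi0⟩, hub⟩ := hθbar
  have hθbarpos : 0 < θbar := hi0 ▸ hθ i0
  have hθbar' : IsGreatest (Set.range θ) θbar := ⟨⟨i0, hi0⟩, hub⟩
  have key := key_lemma M θ hθ hθM v g hg hup
  have hnorm : ∀ t i, ‖v t i‖ = 1 := by
    intro t
    induction t with
    | zero => exact hv0
    | succ t ih => exact fun i => (key t ih i).2
  have hgb : ∀ t i, ‖g t i‖ ≤ ∑ j, |M i j| := fun t i => (key t (hnorm t) i).1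
  have hlow : ∀ t i, 1 - θ i * ∑ j, |M i j| ≤ ‖v t i - θ i • g t i‖ := by
    intro t i
    have h1 : ‖v t i‖ - ‖θ i • g t i‖ ≤ ‖v t i - θ i • g t i‖ := norm_sub_norm_le _ _
    have h2 : ‖θ i • g t i‖ ≤ θ i * ∑ j, |M i j| := by
      rw [norm_smul, Real.norm_eq_abs, abs_of_pos (hθ i)]
      exact mul_le_mul_of_nonneg_left (hgb t i) (le_of_lt (hθ i))
    have := hnorm t i
    linarith
  have hdesc := descent_step M hMsymm hMdiag θ hθ hθM θbar hθbar' v g hg hup hnorm hlow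
  -- lower bound on objective
  have hlb : ∀ t, -(∑ i, ∑ j, |M i j|) ≤ Fobj M (v t) := by
    intro t
    rw [Fobj, ← Finset.sum_neg_distrib]
    refine Finset.sum_le_sum fun i _ => ?_
    rw [← Finset.sum_neg_distrib]
    refine Finset.sum_le_sum fun j _ => ?_
    have habs : |M i j * ⟪v t i, v t j⟫| ≤ |M i j| := by
      rw [abs_mul]
      have h1 : |⟪v t i, v t j⟫| ≤ 1 := by
        have := abs_real_inner_le_norm (v t i) (v t j)
        rw [hnorm t i, hnorm t j, one_mul] at this
        exact this
      nlinarith [abs_nonneg (M i j)]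
    have := neg_abs_le (M i j * ⟪v t i, v t j⟫)
    linarith
  have hSnn : ∀ t : ℕ, (0:ℝ) ≤ ∑ i, ‖v (t + 1) i - v t i‖ ^ 2 :=
    fun t => Finset.sum_nonneg fun i _ => sq_nonneg _
  -- telescoping partial sums
  have hpartial : ∀ T : ℕ, Fobj M (v T) +
      (∑ t ∈ Finset.range T, ∑ i, ‖v (t + 1) i - v t i‖ ^ 2) / θbar ≤ Fobj M (v 0) := by
    intro T
    induction T with
    | zero => simp
    | succ T ih =>
      have hd := hdesc T
      rw [Finset.sum_range_succ, add_div]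
      linarith
  have hbound : ∀ T : ℕ, ∑ t ∈ Finset.range T, ∑ i, ‖v (t + 1) i - v t i‖ ^ 2 ≤
      θbar * (Fobj M (v 0) + ∑ i, ∑ j, |M i j|) := by
    intro T
    have h1 := hpartial T
    have h2 := hlb T
    rw [mul_comm θbar, ← div_le_iff₀ hθbarpos]
    linarith
  refine ⟨fun t i => ⟨hlow t i, hpos i, hnorm t i⟩, ?_, ?_, ?_⟩
  · apply antitone_nat_of_succ_le
    intro t
    have hd := hdesc t
    have hnn : 0 ≤ (∑ i, ‖v (t + 1) i - v t i‖ ^ 2) / θbar :=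
      div_nonneg (hSnn t) (le_of_lt hθbarpos)
    show Fobj M (v (t + 1)) ≤ Fobj M (v t)
    linarith
  · exact Summable.tsum_le_of_sum_range_le (summable_of_sum_range_le hSnn hbound) hbound
  · intro i
    have hterm : ∀ T : ℕ, ∑ t ∈ Finset.range T, ‖v (t + 1) i - v t i‖ ^ 2 ≤
        θbar * (Fobj M (v 0) + ∑ i, ∑ j, |M i j|) := by
      intro T
      refine le_trans (Finset.sum_le_sum fun t _ => ?_) (hbound T)
      exact Finset.single_le_sum
        (f := fun i' : Fin n => ‖v (t + 1) i' - v t i'‖ ^ 2)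
        (fun i' _ => sq_nonneg _) (mem_univ i)
    have hsummable : Summable (fun t => ‖v (t + 1) i - v t i‖ ^ 2) :=
      summable_of_sum_range_le (fun t => sq_nonneg _) hterm
    have h1 : Tendsto (fun t => ‖v (t + 1) i - v t i‖ ^ 2) atTop (𝓝 0) :=
      hsummable.tendsto_atTop_zero
    have h2 : Tendsto (fun t => Real.sqrt (‖v (t + 1) i - v t i‖ ^ 2)) atTop
        (𝓝 (Real.sqrt 0)) := (Real.continuous_sqrt.tendsto 0).comp h1
    have heq : (fun t => Real.sqrt (‖v (t + 1) i - v t i‖ ^ 2)) =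
        fun t => ‖v (t + 1) i - v t i‖ := funext fun t => Real.sqrt_sq (norm_nonneg _)
    rw [Real.sqrt_zero, heq] at h2
    exact h2
end

section
/- Let E be a real inner product space, n a positive integer, and M an n×n real symmetric matrix with zero diagonal (M_{ii} = 0 for all i). Let v_1, …, v_n ∈ E with ‖v_i‖ = 1 for all i, let θ_1, …, θ_n > 0, and suppose the Gauss–Seidel sweep fixes (v_1,…,v_n): that is, with g_i = Σ_{l≠i} M_{il}·v_l and y_i = ‖v_i − θ_i·g_i‖ > 0, one has v_i = (1/y_i)·(v_i − θ_i·g_i) for every i. Then for every i, g_i = ⟨v_i, g_i⟩·v_i, i.e., the Riemannian gradient of f at (v_1,…,v_n) on the product of unit spheres vanishes. -/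
open RealInnerProductSpace Finset

/-- Fixed points of the synchronous Gauss–Seidel sweep are first-order critical points of
the sphere-constrained problem: each Riemannian gradient component vanishes. -/
theorem stmt_10 {E : Type*} [NormedAddCommGroup E] [InnerProductSpace ℝ E]
    (n : ℕ) (hn : 0 < n) (M : Matrix (Fin n) (Fin n) ℝ)
    (hMsymm : M.IsSymm) (hMdiag : ∀ i, M i i = 0)
    (v g : Fin n → E) (θ y : Fin n → ℝ)
    (hv : ∀ i, ‖v i‖ = 1) (hθ : ∀ i, 0 < θ i)
    (hg : ∀ i, g i = ∑ l ∈ Finset.univ.erase i, M i l • v l)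
    (hy : ∀ i, y i = ‖v i - θ i • g i‖) (hy0 : ∀ i, 0 < y i)
    (hfix : ∀ i, v i = (y i)⁻¹ • (v i - θ i • g i)) :
    ∀ i, g i = ⟪v i, g i⟫ • v i := by
  intro i
  have hyne : y i ≠ 0 := (hy0 i).ne'
  have hθne : θ i ≠ 0 := (hθ i).ne'
  have h1 : y i • v i = v i - θ i • g i := by
    conv_lhs => rw [hfix i]
    rw [smul_smul, mul_inv_cancel₀ hyne, one_smul]
  have hgi : g i = ((1 - y i) / θ i) • v i := by
    have : θ i • g i = (1 - y i) • v i := by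
      rw [sub_smul, one_smul, h1]; abel
    have := congrArg (fun x => (θ i)⁻¹ • x) this
    simpa [smul_smul, inv_mul_cancel₀ hθne, div_eq_inv_mul, mul_comm] using this
  have hip : ⟪v i, g i⟫ = (1 - y i) / θ i := by
    rw [hgi, real_inner_smul_right, real_inner_self_eq_norm_sq, hv i]
    ring
  rw [hip, hgi]
end

section
/- Let E be a real inner product space, n a positive integer, and M an n×n real symmetric matrix with zero diagonal (M_{ii} = 0 for all i). Let v_1, …, v_n ∈ E with ‖v_i‖ = 1, let θ_1, …, θ_n > 0, and define w_1, …, w_n recursively by g_i = Σ_{l<i} M_{il}·w_l + Σ_{l>i} M_{il}·v_l, y_i = ‖v_i − θ_i·g_i‖ > 0, w_i = (1/y_i)·(v_i − θ_i·g_i). Then f(w_1,…,w_n) ≤ f(v_1,…,v_n), with equality if and only if w_i = v_i for all i. -/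
open RealInnerProductSpace Finset

section Aux

variable {E : Type*} [NormedAddCommGroup E] [InnerProductSpace ℝ E] {n : ℕ}

private noncomputable def Fval (M : Matrix (Fin n) (Fin n) ℝ) (u : Fin n → E) : ℝ :=
  ∑ i, ∑ j, M i j * ⟪u i, u j⟫

private lemma Fval_split (M : Matrix (Fin n) (Fin n) ℝ)
    (hMsymm : M.IsSymm) (hMdiag : ∀ i, M i i = 0) (u : Fin n → E) (i0 : Fin n) :
    Fval M u = 2 * ⟪u i0, ∑ j ∈ univ.erase i0, M i0 j • u j⟫ +
      ∑ i ∈ univ.erase i0, ∑ j ∈ univ.erase i0, M i j * ⟪u i, u j⟫ := by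
  have hinner : ⟪u i0, ∑ j ∈ univ.erase i0, M i0 j • u j⟫
      = ∑ j ∈ univ.erase i0, M i0 j * ⟪u i0, u j⟫ := by
    rw [inner_sum]
    exact Finset.sum_congr rfl fun j _ => real_inner_smul_right _ _ _
  have h1 : ∀ i : Fin n, (∑ j, M i j * ⟪u i, u j⟫)
      = M i i0 * ⟪u i, u i0⟫ + ∑ j ∈ univ.erase i0, M i j * ⟪u i, u j⟫ := by
    intro i
    rw [← Finset.add_sum_erase _ _ (Finset.mem_univ i0)]
  have h2 : Fval M u = (∑ j, M i0 j * ⟪u i0, u j⟫)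
      + ∑ i ∈ univ.erase i0, ∑ j, M i j * ⟪u i, u j⟫ := by
    rw [Fval, ← Finset.add_sum_erase _ _ (Finset.mem_univ i0)]
  rw [h2, h1 i0, hMdiag i0, Finset.sum_congr rfl (fun i _ => h1 i), Finset.sum_add_distrib]
  have h3 : ∑ i ∈ univ.erase i0, M i i0 * ⟪u i, u i0⟫
      = ∑ i ∈ univ.erase i0, M i0 i * ⟪u i0, u i⟫ := by
    refine Finset.sum_congr rfl fun i _ => ?_
    rw [real_inner_comm, ← hMsymm.apply i0 i]
  rw [h3, hinner]; ring

private lemma Fval_diff (M : Matrix (Fin n) (Fin n) ℝ)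
    (hMsymm : M.IsSymm) (hMdiag : ∀ i, M i i = 0) (u u' : Fin n → E) (i0 : Fin n)
    (h : ∀ j, j ≠ i0 → u' j = u j) :
    Fval M u' - Fval M u
      = 2 * ⟪u' i0 - u i0, ∑ j ∈ univ.erase i0, M i0 j • u j⟫ := by
  have hG : ∑ j ∈ univ.erase i0, M i0 j • u' j = ∑ j ∈ univ.erase i0, M i0 j • u j :=
    Finset.sum_congr rfl fun j hj => by rw [h j (Finset.ne_of_mem_erase hj)]
  have hR : (∑ i ∈ univ.erase i0, ∑ j ∈ univ.erase i0, M i j * ⟪u' i, u' j⟫)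
      = ∑ i ∈ univ.erase i0, ∑ j ∈ univ.erase i0, M i j * ⟪u i, u j⟫ := by
    refine Finset.sum_congr rfl fun i hi => Finset.sum_congr rfl fun j hj => ?_
    rw [h i (Finset.ne_of_mem_erase hi), h j (Finset.ne_of_mem_erase hj)]
  rw [Fval_split M hMsymm hMdiag u i0, Fval_split M hMsymm hMdiag u' i0, hG, hR,
    inner_sub_left]
  ring

end Aux

/-- Strict-decrease property of one Gauss–Seidel sweep (monotonicity step in Theorem 1). -/
theorem stmt_11 {E : Type*} [NormedAddCommGroup E] [InnerProductSpace ℝ E]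
    (n : ℕ) (hn : 0 < n) (M : Matrix (Fin n) (Fin n) ℝ)
    (hMsymm : M.IsSymm) (hMdiag : ∀ i, M i i = 0)
    (v w g : Fin n → E) (y θ : Fin n → ℝ)
    (hv : ∀ i, ‖v i‖ = 1) (hθ : ∀ i, 0 < θ i)
    (hg : ∀ i, g i = (∑ l ∈ Finset.Iio i, M i l • w l) + ∑ l ∈ Finset.Ioi i, M i l • v l)
    (hy : ∀ i, y i = ‖v i - θ i • g i‖) (hy0 : ∀ i, 0 < y i)
    (hw : ∀ i, w i = (y i)⁻¹ • (v i - θ i • g i)) :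
    (∑ i, ∑ j, M i j * ⟪w i, w j⟫) ≤ (∑ i, ∑ j, M i j * ⟪v i, v j⟫) ∧
      ((∑ i, ∑ j, M i j * ⟪w i, w j⟫) = (∑ i, ∑ j, M i j * ⟪v i, v j⟫) ↔
        ∀ i, w i = v i) := by
  have hwnorm : ∀ i, ‖w i‖ = 1 := by
    intro i
    rw [hw i, norm_smul, ← hy i, Real.norm_eq_abs, abs_of_pos (inv_pos.2 (hy0 i)),
      inv_mul_cancel₀ (hy0 i).ne']
  have hww : ∀ i, ⟪w i, w i⟫ = 1 := by
    intro i
    rw [real_inner_self_eq_norm_sq, hwnorm i]; norm_num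
  have hvv : ∀ i, ⟪v i, v i⟫ = 1 := by
    intro i
    rw [real_inner_self_eq_norm_sq, hv i]; norm_num
  have hyw : ∀ i, y i • w i = v i - θ i • g i := by
    intro i
    rw [hw i, smul_smul, mul_inv_cancel₀ (hy0 i).ne', one_smul]
  have hgθ : ∀ i, θ i • g i = v i - y i • w i := by
    intro i
    rw [hyw i]; abel
  have hginner : ∀ i, g i = (θ i)⁻¹ • (v i - y i • w i) := by
    intro i
    rw [← hgθ i, smul_smul, inv_mul_cancel₀ (hθ i).ne', one_smul]
  -- per-index descent term
  set D : Fin n → ℝ := fun i => 2 * ((1 + y i) / θ i) * (⟪w i, v i⟫ - 1) with hD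
  have hinner : ∀ i, (2 : ℝ) * ⟪w i - v i, g i⟫ = D i := by
    intro i
    have hvw : ⟪v i, w i⟫ = ⟪w i, v i⟫ := real_inner_comm _ _
    rw [hginner i, real_inner_smul_right]
    simp only [inner_sub_left, inner_sub_right, real_inner_smul_right, hww i, hvv i, hvw, hD]
    have hθne := (hθ i).ne'
    field_simp
    ring
  have hDnonpos : ∀ i, D i ≤ 0 := by
    intro i
    have h1 : ⟪w i, v i⟫ ≤ 1 := by
      have := real_inner_le_norm (w i) (v i)
      rwa [hwnorm i, hv i, one_mul] at this
    have h2 : (0 : ℝ) ≤ 2 * ((1 + y i) / θ i) := by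
      have := hy0 i; have := hθ i
      have : (0:ℝ) < (1 + y i) / θ i := div_pos (by linarith) (hθ i)
      linarith
    have h3 : ⟪w i, v i⟫ - 1 ≤ 0 := by linarith
    exact mul_nonpos_of_nonneg_of_nonpos h2 h3
  have hDzero : ∀ i, D i = 0 ↔ w i = v i := by
    intro i
    constructor
    · intro h0
      have hc : (0 : ℝ) < 2 * ((1 + y i) / θ i) := by
        have := hy0 i
        have : (0:ℝ) < (1 + y i) / θ i := div_pos (by linarith) (hθ i)
        linarith
      have hwv : ⟪w i, v i⟫ = 1 := by
        rcases mul_eq_zero.1 h0 with h | h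
        · exact absurd h hc.ne'
        · linarith
      have hvw : ⟪v i, w i⟫ = 1 := (real_inner_comm _ _).trans hwv
      have hz : ⟪w i - v i, w i - v i⟫ = (0 : ℝ) := by
        simp only [inner_sub_left, inner_sub_right, hww i, hvv i, hwv, hvw]
        ring
      have := inner_self_eq_zero.1 hz
      exact sub_eq_zero.1 this
    · intro h
      have : ⟪w i, v i⟫ = 1 := by rw [h, hvv i]
      rw [hD]; simp only [this]; ring
  -- the intermediate sweep configurations
  set u : ℕ → Fin n → E := fun k i => if (i : ℕ) < k then w i else v i with hu
  have hu0 : u 0 = v := by funext i; simp [hu]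
  have hun : u n = w := by funext i; simp [hu, i.isLt]
  have hstep : ∀ k : ℕ, (hk : k < n) →
      Fval M (u (k + 1)) - Fval M (u k) = D ⟨k, hk⟩ := by
    intro k hk
    set i0 : Fin n := ⟨k, hk⟩ with hi0
    have hagree : ∀ j, j ≠ i0 → u (k + 1) j = u k j := by
      intro j hj
      have hne : (j : ℕ) ≠ k := fun h => hj (Fin.ext h)
      simp only [hu]
      by_cases h : (j : ℕ) < k
      · simp [h, Nat.lt_succ_of_lt h]
      · have h' : ¬ (j : ℕ) < k + 1 := by omega
        simp [h, h']
    have hG : ∑ j ∈ univ.erase i0, M i0 j • u k j = g i0 := by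
      have hsplit : (univ.erase i0 : Finset (Fin n)) = Finset.Iio i0 ∪ Finset.Ioi i0 := by
        ext j
        simp only [Finset.mem_erase, Finset.mem_univ, and_true, Finset.mem_union,
          Finset.mem_Iio, Finset.mem_Ioi]
        constructor
        · exact fun h => h.lt_or_gt
        · rintro (h | h)
          · exact h.ne
          · exact h.ne'
      have hdisj : Disjoint (Finset.Iio i0) (Finset.Ioi i0) := by
        rw [Finset.disjoint_left]
        intro j hj1 hj2
        simp only [Finset.mem_Iio] at hj1
        simp only [Finset.mem_Ioi] at hj2
        exact absurd (hj1.trans hj2) (lt_irrefl _)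
      rw [hsplit, Finset.sum_union hdisj, hg i0]
      congr 1
      · refine Finset.sum_congr rfl fun j hj => ?_
        have hj0 : j < i0 := Finset.mem_Iio.1 hj
        have hj' : (j : ℕ) < k := hj0
        simp [hu, hj']
      · refine Finset.sum_congr rfl fun j hj => ?_
        have hj0 : i0 < j := Finset.mem_Ioi.1 hj
        have hj1 : k < (j : ℕ) := hj0
        have hj2 : ¬ (j : ℕ) < k := by omega
        simp [hu, hj2]
    have huk1 : u (k + 1) i0 = w i0 := by simp [hu, hi0]
    have huk : u k i0 = v i0 := by simp [hu, hi0]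
    rw [Fval_diff M hMsymm hMdiag (u k) (u (k + 1)) i0 hagree, hG, huk1, huk, hinner i0]
  have htel : Fval M w - Fval M v = ∑ i, D i := by
    calc Fval M w - Fval M v
        = ∑ k ∈ Finset.range n, (Fval M (u (k + 1)) - Fval M (u k)) := by
          rw [Finset.sum_range_sub (fun k => Fval M (u k)), hu0, hun]
      _ = ∑ k ∈ Finset.range n, (if h : k < n then D ⟨k, h⟩ else 0) :=
          Finset.sum_congr rfl fun k hk => by
            rw [hstep k (Finset.mem_range.1 hk), dif_pos (Finset.mem_range.1 hk)]
      _ = ∑ i, D i := by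
          rw [← Fin.sum_univ_eq_sum_range (fun k => if h : k < n then D ⟨k, h⟩ else 0)]
          exact Finset.sum_congr rfl fun i _ => by rw [dif_pos i.isLt]
  have hFw : Fval M w = ∑ i, ∑ j, M i j * ⟪w i, w j⟫ := rfl
  have hFv : Fval M v = ∑ i, ∑ j, M i j * ⟪v i, v j⟫ := rfl
  rw [hFw, hFv] at htel
  have hsum_nonpos : ∑ i, D i ≤ 0 := Finset.sum_nonpos fun i _ => hDnonpos i
  refine ⟨by linarith, ?_, ?_⟩
  · intro h
    have hsum0 : ∑ i, D i = 0 := by linarith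
    intro i
    exact (hDzero i).1
      ((Finset.sum_eq_zero_iff_of_nonpos fun j _ => hDnonpos j).1 hsum0 i (Finset.mem_univ i))
  · intro h
    have hwv : w = v := funext h
    rw [hwv]
end

section
/- Let E be a real inner product space and let c ∈ E with ‖c‖ < 1. Then the map φ defined by φ(v) = (v − c)/‖v − c‖ is a well-defined bijection from the unit sphere {v ∈ E : ‖v‖ = 1} onto itself; in particular ‖v − c‖ ≥ 1 − ‖c‖ > 0 for every unit vector v. -/
open RealInnerProductSpace Metric

private lemma sq_norm_add_smul {E : Type*} [NormedAddCommGroup E] [InnerProductSpace ℝ E]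
    (c w : E) (hw : ‖w‖ = 1) (t : ℝ) :
    ‖c + t • w‖ ^ 2 = ‖c‖ ^ 2 + 2 * t * ⟪c, w⟫ + t ^ 2 := by
  rw [@norm_add_sq_real, real_inner_smul_right, norm_smul, Real.norm_eq_abs, hw, mul_one]
  rw [sq_abs]; ring

private lemma uniq_pos_root {E : Type*} [NormedAddCommGroup E] [InnerProductSpace ℝ E]
    {c : E} (hc : ‖c‖ < 1) {w : E} (hw : ‖w‖ = 1) {t₁ t₂ : ℝ}
    (h₁ : 0 < t₁) (h₂ : 0 < t₂)
    (e₁ : ‖c + t₁ • w‖ = 1) (e₂ : ‖c + t₂ • w‖ = 1) : t₁ = t₂ := by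
  have q₁ := sq_norm_add_smul c w hw t₁
  have q₂ := sq_norm_add_smul c w hw t₂
  rw [e₁] at q₁; rw [e₂] at q₂
  set a := ⟪c, w⟫ with ha
  have hc2 : ‖c‖ ^ 2 < 1 := by nlinarith [norm_nonneg c]
  have key : (t₁ - t₂) * (t₁ + t₂ + 2 * a) = 0 := by nlinarith
  have hp1 : 0 < t₁ + 2 * a := by nlinarith
  have hpos : 0 < t₁ + t₂ + 2 * a := by linarith
  have := mul_eq_zero.mp key
  rcases this with h | h
  · linarith
  · linarith

/-- The map v ↦ (v - c)/‖v - c‖ with ‖c‖ < 1 is a well-defined bijection of the unit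
sphere onto itself (invertibility fact underlying Lemma 3). -/
theorem stmt_14 {E : Type*} [NormedAddCommGroup E] [InnerProductSpace ℝ E]
    (c : E) (hc : ‖c‖ < 1) :
    (∀ v : E, ‖v‖ = 1 → ‖v - c‖ ≥ 1 - ‖c‖) ∧ (0 < 1 - ‖c‖) ∧
      Set.BijOn (fun v : E => ‖v - c‖⁻¹ • (v - c))
        (Metric.sphere (0 : E) 1) (Metric.sphere (0 : E) 1) := by
  have hlow : ∀ v : E, ‖v‖ = 1 → ‖v - c‖ ≥ 1 - ‖c‖ := by
    intro v hv
    have := norm_sub_norm_le v c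
    rw [hv] at this
    linarith
  have hσ : 0 < 1 - ‖c‖ := by linarith
  refine ⟨hlow, hσ, ?_, ?_, ?_⟩
  · -- MapsTo
    intro v hv
    rw [mem_sphere_zero_iff_norm] at hv ⊢
    have hn : 0 < ‖v - c‖ := lt_of_lt_of_le hσ (hlow v hv)
    rw [norm_smul, Real.norm_eq_abs, abs_inv, abs_of_pos hn, inv_mul_cancel₀ hn.ne']
  · -- InjOn
    intro v hv v' hv' heq
    rw [mem_sphere_zero_iff_norm] at hv hv'
    simp only at heq
    have hn : 0 < ‖v - c‖ := lt_of_lt_of_le hσ (hlow v hv)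
    have hn' : 0 < ‖v' - c‖ := lt_of_lt_of_le hσ (hlow v' hv')
    set w : E := ‖v - c‖⁻¹ • (v - c) with hwdef
    have hw : ‖w‖ = 1 := by
      rw [hwdef, norm_smul, Real.norm_eq_abs, abs_inv, abs_of_pos hn, inv_mul_cancel₀ hn.ne']
    have hv1 : v = c + ‖v - c‖ • w := by
      rw [hwdef, smul_smul, mul_inv_cancel₀ hn.ne', one_smul]
      abel
    have hv2 : v' = c + ‖v' - c‖ • w := by
      rw [heq, smul_smul, mul_inv_cancel₀ hn'.ne', one_smul]
      abel
    have := uniq_pos_root hc hw hn hn' (by rw [← hv1]; exact hv) (by rw [← hv2]; exact hv')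
    rw [hv1, hv2, this]
  · -- SurjOn
    intro w hw
    rw [mem_sphere_zero_iff_norm] at hw
    set a : ℝ := ⟪c, w⟫ with ha
    have hc2 : ‖c‖ ^ 2 < 1 := by nlinarith [norm_nonneg c]
    set D : ℝ := a ^ 2 + 1 - ‖c‖ ^ 2 with hD
    have hD0 : 0 < D := by nlinarith
    have hsq : Real.sqrt D ^ 2 = D := Real.sq_sqrt hD0.le
    have habs : |a| < Real.sqrt D := by
      rw [← Real.sqrt_sq_eq_abs]
      exact Real.sqrt_lt_sqrt (sq_nonneg a) (by nlinarith)
    set t : ℝ := -a + Real.sqrt D with ht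
    have htpos : 0 < t := by
      have : a ≤ |a| := le_abs_self a
      simp only [ht]; linarith
    set v : E := c + t • w with hvdef
    have hv1 : ‖v‖ = 1 := by
      have hsq2 : ‖v‖ ^ 2 = 1 := by
        rw [hvdef, sq_norm_add_smul c w hw t, ← ha, ht]
        linear_combination hsq + hD
      have : ‖v‖ = Real.sqrt (‖v‖ ^ 2) := (Real.sqrt_sq (norm_nonneg v)).symm
      rw [this, hsq2, Real.sqrt_one]
    refine ⟨v, mem_sphere_zero_iff_norm.mpr hv1, ?_⟩
    simp only
    have hvc : v - c = t • w := by rw [hvdef]; abel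
    rw [hvc, norm_smul, Real.norm_eq_abs, abs_of_pos htpos, hw, mul_one, smul_smul,
      inv_mul_cancel₀ htpos.ne', one_smul]
end
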